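/- Let D, D̂ be positive semidefinite symmetric on ℝ^m, λ > 0, δ, δ̂ ∈ ℝ^m. Set û = (D̂ + λI)⁻¹ δ̂ and u* = D⁻¹δ (assuming D invertible). Then |‖(D̂ + λI)^{-1/2} δ̂‖² − ‖D^{-1/2}δ‖²| ≤ 2‖δ − δ̂‖·‖û‖ + (1 + λ)‖û‖²·‖D − D̂‖_op + ‖D^{1/2}(û − u*)‖² + λ‖û‖². -/

import Mathlib

open Matrix

noncomputable def Matrix.PosSemidef.sqrt {n : Type*} [Fintype n] [DecidableEq n]
    {A : Matrix n n ℝ} (hA : A.PosSemidef) : Matrix n n ℝ :=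
  hA.1.eigenvectorUnitary.1 * diagonal ((↑) ∘ (Real.sqrt ·) ∘ hA.1.eigenvalues) *
    (star hA.1.eigenvectorUnitary : Matrix n n ℝ)

private lemma psd_sqrt_herm_aux {n : Type*} [Fintype n] [DecidableEq n]
    {A : Matrix n n ℝ} (hA : A.PosSemidef) : hA.sqrt.IsHermitian := by
  unfold Matrix.PosSemidef.sqrt Matrix.IsHermitian
  simp [Matrix.conjTranspose_mul, Matrix.star_eq_conjTranspose, Matrix.diagonal_conjTranspose,
    Matrix.mul_assoc]

private lemma psd_sqrt_mul_self_aux {n : Type*} [Fintype n] [DecidableEq n]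
    {A : Matrix n n ℝ} (hA : A.PosSemidef) : hA.sqrt * hA.sqrt = A := by
  unfold Matrix.PosSemidef.sqrt
  have hU : (star hA.1.eigenvectorUnitary : Matrix n n ℝ) * hA.1.eigenvectorUnitary.1 = 1 :=
    Unitary.coe_star_mul_self _
  have hd : diagonal (((↑) ∘ (Real.sqrt ·) ∘ hA.1.eigenvalues : n → ℝ)) *
      diagonal (((↑) ∘ (Real.sqrt ·) ∘ hA.1.eigenvalues : n → ℝ)) = diagonal (RCLike.ofReal ∘ hA.1.eigenvalues) := by
    rw [diagonal_mul_diagonal]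
    congr 1
    funext i
    simp [Real.mul_self_sqrt (hA.eigenvalues_nonneg i)]
  conv_rhs => rw [hA.1.spectral_theorem, Unitary.conjStarAlgAut_apply]
  calc _ = hA.1.eigenvectorUnitary.1 * diagonal ((↑) ∘ (Real.sqrt ·) ∘ hA.1.eigenvalues) *
      ((star hA.1.eigenvectorUnitary : Matrix n n ℝ) * hA.1.eigenvectorUnitary.1) *
      diagonal ((↑) ∘ (Real.sqrt ·) ∘ hA.1.eigenvalues) * (star hA.1.eigenvectorUnitary : Matrix n n ℝ) := by
        simp only [Matrix.mul_assoc]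
    _ = _ := by rw [hU, Matrix.mul_one, Matrix.mul_assoc _ (diagonal _) (diagonal _), hd]

private lemma dot_cs_aux (m : ℕ) (v w : Fin m → ℝ) :
    |v ⬝ᵥ w| ≤ Real.sqrt (v ⬝ᵥ v) * Real.sqrt (w ⬝ᵥ w) := by
  have h := Finset.sum_mul_sq_le_sq_mul_sq Finset.univ v w
  have hv : (0:ℝ) ≤ v ⬝ᵥ v := Finset.sum_nonneg fun i _ => mul_self_nonneg _
  rw [← Real.sqrt_sq_eq_abs, ← Real.sqrt_mul hv]
  apply Real.sqrt_le_sqrt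
  simpa [dotProduct, sq] using h

private lemma dot_symm_aux (m : ℕ) (B : Matrix (Fin m) (Fin m) ℝ) (hB : Bᵀ = B)
    (x y : Fin m → ℝ) : x ⬝ᵥ (B *ᵥ y) = y ⬝ᵥ (B *ᵥ x) := by
  rw [dotProduct_mulVec, ← mulVec_transpose, hB, dotProduct_comm]

private lemma dot_sq_aux (m : ℕ) (B : Matrix (Fin m) (Fin m) ℝ) (hB : Bᵀ = B)
    (x : Fin m → ℝ) : (B *ᵥ x) ⬝ᵥ (B *ᵥ x) = x ⬝ᵥ ((B * B) *ᵥ x) := by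
  rw [← mulVec_mulVec, dotProduct_mulVec, ← mulVec_transpose, hB, dotProduct_comm]

private lemma op_bound_aux (m : ℕ) (M : Matrix (Fin m) (Fin m) ℝ) (x : Fin m → ℝ) :
    |x ⬝ᵥ (M *ᵥ x)| ≤ ‖Matrix.toEuclideanCLM (𝕜 := ℝ) M‖ * (x ⬝ᵥ x) := by
  set T := Matrix.toEuclideanCLM (𝕜 := ℝ) M with hT
  set y : EuclideanSpace ℝ (Fin m) := (WithLp.equiv 2 _).symm x with hy
  have hTy : T y = (WithLp.equiv 2 _).symm (M *ᵥ x) := by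
    rw [hy, hT, WithLp.equiv_symm_apply, Matrix.toEuclideanCLM_toLp]
  have h1 : x ⬝ᵥ (M *ᵥ x) = inner ℝ y (T y) := by
    rw [hTy, hy, WithLp.equiv_symm_apply, EuclideanSpace.inner_toLp_toLp, star_trivial, dotProduct_comm]
  have h2 : x ⬝ᵥ x = ‖y‖ ^ 2 := by
    rw [← real_inner_self_eq_norm_sq, hy, WithLp.equiv_symm_apply, EuclideanSpace.inner_toLp_toLp, star_trivial]
  rw [h1, h2]
  calc |inner ℝ y (T y)| ≤ ‖y‖ * ‖T y‖ := abs_real_inner_le_norm y (T y)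
    _ ≤ ‖y‖ * (‖T‖ * ‖y‖) := mul_le_mul_of_nonneg_left (T.le_opNorm y) (norm_nonneg y)
    _ = ‖T‖ * ‖y‖ ^ 2 := by ring

/-- Comparison inequality between the empirical regularized squared
kernel Sobolev discrepancy and the population unregularized one. -/
theorem comparison_inequality (m : ℕ) (D Dh : Matrix (Fin m) (Fin m) ℝ)
    (hD : D.PosDef) (hDh : Dh.PosSemidef) (t : ℝ) (ht : 0 < t)
    (δ δh : Fin m → ℝ)
    (hDht : (Dh + t • (1 : Matrix (Fin m) (Fin m) ℝ)).PosSemidef)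
    (uh ustar : Fin m → ℝ)
    (huh : uh = (Dh + t • (1 : Matrix (Fin m) (Fin m) ℝ))⁻¹ *ᵥ δh)
    (hustar : ustar = D⁻¹ *ᵥ δ) :
    |(hDht.sqrt⁻¹ *ᵥ δh) ⬝ᵥ (hDht.sqrt⁻¹ *ᵥ δh) -
        (hD.posSemidef.sqrt⁻¹ *ᵥ δ) ⬝ᵥ (hD.posSemidef.sqrt⁻¹ *ᵥ δ)| ≤
      2 * Real.sqrt ((δ - δh) ⬝ᵥ (δ - δh)) * Real.sqrt (uh ⬝ᵥ uh) +
      (1 + t) * (uh ⬝ᵥ uh) * ‖Matrix.toEuclideanCLM (𝕜 := ℝ) (D - Dh)‖ +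
      (hD.posSemidef.sqrt *ᵥ (uh - ustar)) ⬝ᵥ (hD.posSemidef.sqrt *ᵥ (uh - ustar)) +
      t * (uh ⬝ᵥ uh) := by
  set A := Dh + t • (1 : Matrix (Fin m) (Fin m) ℝ) with hAdef
  -- A is positive definite
  have htI : (t • (1 : Matrix (Fin m) (Fin m) ℝ)).PosDef := by
    rw [show t • (1 : Matrix (Fin m) (Fin m) ℝ) = Matrix.diagonal (fun _ => t) by
      simp [Matrix.smul_one_eq_diagonal]]
    exact Matrix.posDef_diagonal_iff.mpr fun _ => ht
  have hA : A.PosDef := Matrix.PosDef.posSemidef_add hDh htI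
  -- square roots are symmetric and invertible
  have hBsym : (hDht.sqrt)ᵀ = hDht.sqrt := by
    have := psd_sqrt_herm_aux hDht
    rwa [Matrix.IsHermitian, Matrix.conjTranspose_eq_transpose_of_trivial] at this
  have hCsym : (hD.posSemidef.sqrt)ᵀ = hD.posSemidef.sqrt := by
    have := psd_sqrt_herm_aux hD.posSemidef
    rwa [Matrix.IsHermitian, Matrix.conjTranspose_eq_transpose_of_trivial] at this
  have hDsym : Dᵀ = D := by
    have := hD.isHermitian
    rwa [Matrix.IsHermitian, Matrix.conjTranspose_eq_transpose_of_trivial] at this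
  have hBB : hDht.sqrt * hDht.sqrt = A := psd_sqrt_mul_self_aux hDht
  have hCC : hD.posSemidef.sqrt * hD.posSemidef.sqrt = D := psd_sqrt_mul_self_aux hD.posSemidef
  have hBinvsym : (hDht.sqrt⁻¹)ᵀ = hDht.sqrt⁻¹ := by
    rw [Matrix.transpose_nonsing_inv, hBsym]
  have hCinvsym : (hD.posSemidef.sqrt⁻¹)ᵀ = hD.posSemidef.sqrt⁻¹ := by
    rw [Matrix.transpose_nonsing_inv, hCsym]
  -- term 1 equals δh ⬝ᵥ uh
  have hBinv2 : hDht.sqrt⁻¹ * hDht.sqrt⁻¹ = A⁻¹ := by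
    rw [← Matrix.mul_inv_rev, hBB]
  have hterm1 : (hDht.sqrt⁻¹ *ᵥ δh) ⬝ᵥ (hDht.sqrt⁻¹ *ᵥ δh) = δh ⬝ᵥ uh := by
    rw [dot_sq_aux m _ hBinvsym, hBinv2, huh]
  have hCinv2 : hD.posSemidef.sqrt⁻¹ * hD.posSemidef.sqrt⁻¹ = D⁻¹ := by
    rw [← Matrix.mul_inv_rev, hCC]
  have hterm2 : (hD.posSemidef.sqrt⁻¹ *ᵥ δ) ⬝ᵥ (hD.posSemidef.sqrt⁻¹ *ᵥ δ) = δ ⬝ᵥ ustar := by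
    rw [dot_sq_aux m _ hCinvsym, hCinv2, hustar]
  -- recover δh, δ
  have hδh : δh = A *ᵥ uh := by
    rw [huh, mulVec_mulVec, Matrix.mul_nonsing_inv _ hA.det_pos.ne'.isUnit, one_mulVec]
  have hδ : δ = D *ᵥ ustar := by
    rw [hustar, mulVec_mulVec, Matrix.mul_nonsing_inv _ hD.det_pos.ne'.isUnit, one_mulVec]
  -- the S term
  have hSterm : (hD.posSemidef.sqrt *ᵥ (uh - ustar)) ⬝ᵥ (hD.posSemidef.sqrt *ᵥ (uh - ustar)) =
      (uh - ustar) ⬝ᵥ (D *ᵥ (uh - ustar)) := by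
    rw [dot_sq_aux m _ hCsym, hCC]
  -- key algebraic identity
  have hsymDuu : ustar ⬝ᵥ (D *ᵥ uh) = uh ⬝ᵥ (D *ᵥ ustar) := dot_symm_aux m D hDsym ustar uh
  have key : δh ⬝ᵥ uh - δ ⬝ᵥ ustar =
      2 * ((δh - δ) ⬝ᵥ uh) + uh ⬝ᵥ ((D - Dh) *ᵥ uh)
        - t * (uh ⬝ᵥ uh) - (uh - ustar) ⬝ᵥ (D *ᵥ (uh - ustar)) := by
    rw [hδh, hδ, hAdef]
    simp only [Matrix.add_mulVec, Matrix.sub_mulVec, Matrix.smul_mulVec, Matrix.one_mulVec,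
      Matrix.mulVec_sub, dotProduct_add, add_dotProduct, dotProduct_sub, sub_dotProduct,
      dotProduct_smul, smul_dotProduct, smul_eq_mul, dotProduct_comm]
    linear_combination -hsymDuu
  -- bounds
  set P := (δh - δ) ⬝ᵥ uh with hPdef
  set Q := uh ⬝ᵥ ((D - Dh) *ᵥ uh) with hQdef
  set E := uh ⬝ᵥ uh with hEdef
  set S := (uh - ustar) ⬝ᵥ (D *ᵥ (uh - ustar)) with hSdef
  set N := ‖Matrix.toEuclideanCLM (𝕜 := ℝ) (D - Dh)‖ with hNdef
  have hE : 0 ≤ E := Finset.sum_nonneg fun i _ => mul_self_nonneg _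
  have hS : 0 ≤ S := by
    rw [← hSterm]
    exact Finset.sum_nonneg fun i _ => mul_self_nonneg _
  have hN : 0 ≤ N := norm_nonneg _
  have hflip : (δh - δ) ⬝ᵥ (δh - δ) = (δ - δh) ⬝ᵥ (δ - δh) := by
    rw [← neg_sub δ δh, neg_dotProduct, dotProduct_neg, neg_neg]
  have hP : |P| ≤ Real.sqrt ((δ - δh) ⬝ᵥ (δ - δh)) * Real.sqrt E := by
    rw [hPdef, hEdef, ← hflip]
    exact dot_cs_aux m _ _
  have hQ : |Q| ≤ N * E := op_bound_aux m _ _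
  have hQ' : N * E ≤ (1 + t) * E * N := by nlinarith [mul_nonneg (mul_nonneg ht.le hE) hN]
  obtain ⟨hP1, hP2⟩ := abs_le.1 hP
  obtain ⟨hQ1, hQ2⟩ := abs_le.1 hQ
  have htE : 0 ≤ t * E := mul_nonneg ht.le hE
  rw [hterm1, hterm2, key, hSterm]
  rw [abs_le]
  constructor
  · nlinarith [Real.sqrt_nonneg ((δ - δh) ⬝ᵥ (δ - δh)), Real.sqrt_nonneg E]
  · nlinarith [Real.sqrt_nonneg ((δ - δh) ⬝ᵥ (δ - δh)), Real.sqrt_nonneg E]
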